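/- Let S_k = Σ_{m=0}^{k}(-t)^m and T_k = Σ_{m=1}^{k}(-1)^{m+1}t^m in ℚ(t). Define f(k) = S_k·(1-2t+2t²-2t³+t⁴) + T_k·(-t^{-2}+3t^{-1}-4+3t-t²) + T_k·(-t^{-2}+2t^{-1}-1) - t^{-3}+3t^{-2}-6t^{-1}+6-3t+t² and g(k) = S_k·(1-t) + 3 - 2t^{-1} - 2t + t². Then for every k ≥ 0, f(k) ≠ g(k) as elements of ℚ(t). -/

import Mathlib

open Finset

noncomputable section

def t : RatFunc ℚ := RatFunc.X

def S (k : ℕ) : RatFunc ℚ := ∑ m ∈ range (k + 1), (-t) ^ m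

def T (k : ℕ) : RatFunc ℚ := ∑ m ∈ Icc 1 k, (-1 : RatFunc ℚ) ^ (m + 1) * t ^ m

def f (k : ℕ) : RatFunc ℚ :=
  S k * (1 - 2 * t + 2 * t ^ 2 - 2 * t ^ 3 + t ^ 4) +
    T k * (-t⁻¹ ^ 2 + 3 * t⁻¹ - 4 + 3 * t - t ^ 2) +
    T k * (-t⁻¹ ^ 2 + 2 * t⁻¹ - 1) +
    (-t⁻¹ ^ 3 + 3 * t⁻¹ ^ 2 - 6 * t⁻¹ + 6 - 3 * t + t ^ 2)

def g (k : ℕ) : RatFunc ℚ :=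
  S k * (1 - t) + 3 - 2 * t⁻¹ - 2 * t + t ^ 2

lemma t_ne_zero : t ≠ 0 := RatFunc.X_ne_zero

lemma one_add_t_ne_zero : (1 + t : RatFunc ℚ) ≠ 0 := by
  have : ((1 + Polynomial.X : Polynomial ℚ)) ≠ 0 := by
    have h := Polynomial.X_add_C_ne_zero (1 : ℚ)
    simpa [add_comm] using h
  have h2 := RatFunc.algebraMap_ne_zero (K := ℚ) this
  simpa [map_add, RatFunc.algebraMap_X, t] using h2

lemma T_eq (k : ℕ) : T k = 1 - S k := by
  induction k with
  | zero => simp [T, S]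
  | succ n ih =>
    have hT : T (n + 1) = T n + (-1 : RatFunc ℚ) ^ (n + 2) * t ^ (n + 1) := by
      rw [T, T, Finset.sum_Icc_succ_top (by omega)]
    have hS : S (n + 1) = S n + (-t) ^ (n + 1) := by
      rw [S, S, Finset.sum_range_succ]
    rw [hT, hS, ih]
    ring

lemma S_eq (k : ℕ) : (1 + t) * S k = 1 - (-t) ^ (k + 1) := by
  have h := geom_sum_mul (-t) (k + 1)
  rw [S]
  linear_combination -h

def Pp : Polynomial ℚ :=
  Polynomial.X ^ 7 - 3 * Polynomial.X ^ 6 + 4 * Polynomial.X ^ 5 - 4 * Polynomial.X ^ 4 +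
    4 * Polynomial.X ^ 3 - 3 * Polynomial.X ^ 2 + 2 * Polynomial.X - 1

def Qp : Polynomial ℚ :=
  -Polynomial.X ^ 7 + 2 * Polynomial.X ^ 6 - 3 * Polynomial.X ^ 5 + 4 * Polynomial.X ^ 4 -
    5 * Polynomial.X ^ 3 + 5 * Polynomial.X ^ 2 - 2 * Polynomial.X

lemma key (k : ℕ) :
    (1 + t) * t ^ 3 * (f k - g k) =
      algebraMap (Polynomial ℚ) (RatFunc ℚ) (Pp + (-Polynomial.X) ^ (k + 1) * Qp) := by
  have step1 : t ^ 3 * (f k - g k) =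
      S k * (t ^ 7 - 2 * t ^ 6 + 2 * t ^ 5 - t ^ 4) +
        (1 - S k) * (-2 * t + 5 * t ^ 2 - 5 * t ^ 3 + 3 * t ^ 4 - t ^ 5) +
        (-1 + 3 * t - 4 * t ^ 2 + 3 * t ^ 3 - t ^ 4) := by
    rw [f, g, T_eq]
    field_simp [t_ne_zero]
    ring
  have hmap : algebraMap (Polynomial ℚ) (RatFunc ℚ) (Pp + (-Polynomial.X) ^ (k + 1) * Qp) =
      (t ^ 7 - 3 * t ^ 6 + 4 * t ^ 5 - 4 * t ^ 4 + 4 * t ^ 3 - 3 * t ^ 2 + 2 * t - 1) +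
        (-t) ^ (k + 1) *
          (-t ^ 7 + 2 * t ^ 6 - 3 * t ^ 5 + 4 * t ^ 4 - 5 * t ^ 3 + 5 * t ^ 2 - 2 * t) := by
    simp only [Pp, Qp, map_add, map_sub, map_mul, map_pow, map_neg, map_one, map_ofNat,
      RatFunc.algebraMap_X]
    rfl
  rw [mul_assoc, step1, hmap]
  linear_combination ((t ^ 7 - 2 * t ^ 6 + 2 * t ^ 5 - t ^ 4) -
    (-2 * t + 5 * t ^ 2 - 5 * t ^ 3 + 3 * t ^ 4 - t ^ 5)) * S_eq k

lemma poly_ne (k : ℕ) : (Pp + (-Polynomial.X) ^ (k + 1) * Qp : Polynomial ℚ) ≠ 0 := by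
  intro h
  have he := congrArg (Polynomial.eval 2) h
  simp only [Pp, Qp, Polynomial.eval_add, Polynomial.eval_sub, Polynomial.eval_mul,
    Polynomial.eval_pow, Polynomial.eval_neg, Polynomial.eval_ofNat, Polynomial.eval_one,
    Polynomial.eval_X, Polynomial.eval_zero] at he
  have h2 : ((-2 : ℚ)) ^ (k + 1) = 23 / 56 := by linarith [he]
  have h3 : |(-2 : ℚ)| ^ (k + 1) = |(23 : ℚ) / 56| := by
    rw [← abs_pow, h2]
  rw [abs_neg, abs_two] at h3
  have h4 : (1 : ℚ) ≤ 2 ^ (k + 1) := one_le_pow₀ (by norm_num)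
  rw [show |(23 : ℚ) / 56| = 23 / 56 from abs_of_pos (by norm_num)] at h3
  rw [h3] at h4
  norm_num at h4

theorem stmt_13 (k : ℕ) : f k ≠ g k := by
  intro h
  have hk := key k
  rw [h, sub_self, mul_zero] at hk
  exact RatFunc.algebraMap_ne_zero (poly_ne k) hk.symm

end
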